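/- Let u_T : ℝ → ℝ be Lipschitz and set u_T^* := S_T^+(S_T^- u_T). Then u_T^* is a viscosity solution of the obstacle problem min{ v − u_T, −∂ₓₓv + (T·H''(∂ₓv))⁻¹ } = 0 on ℝ; that is, u_T^* is both a viscosity supersolution and a viscosity subsolution of this equation. -/

import Mathlib

open Filter
open Set Topology

noncomputable section

/-- A real function is Lipschitz (with some constant). -/
def IsLip1 (f : ℝ → ℝ) : Prop := ∃ K : NNReal, LipschitzWith K f

/-- The Legendre transform `L(q) = sup_p (q·p - H(p))`. -/
def legendre1 (H : ℝ → ℝ) (q : ℝ) : ℝ := ⨆ p : ℝ, (q * p - H p)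

/-- The forward Hopf–Lax operator `(S_T^+ g)(x) = inf_y [g(y) + T·L((x-y)/T)]`. -/
def Splus1 (T : ℝ) (L : ℝ → ℝ) (g : ℝ → ℝ) (x : ℝ) : ℝ :=
  ⨅ y : ℝ, (g y + T * L ((x - y) / T))

/-- The backward operator `(S_T^- g)(x) = sup_y [g(y) - T·L((y-x)/T)]`. -/
def Sminus1 (T : ℝ) (L : ℝ → ℝ) (g : ℝ → ℝ) (x : ℝ) : ℝ :=
  ⨆ y : ℝ, (g y - T * L ((y - x) / T))

/-- `v` is a viscosity supersolution of `min{v - u_T, -∂ₓₓv + (T·H''(∂ₓv))⁻¹} = 0`. -/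
def ViscSuper1 (T : ℝ) (H uT v : ℝ → ℝ) : Prop :=
  ∀ φ : ℝ → ℝ, ContDiff ℝ 2 φ → ∀ x0 : ℝ,
    IsLocalMin (fun x => v x - φ x) x0 → v x0 = φ x0 →
    uT x0 ≤ φ x0 ∧ deriv (deriv φ) x0 ≤ 1 / (T * deriv (deriv H) (deriv φ x0))

/-- `v` is a viscosity subsolution of `min{v - u_T, -∂ₓₓv + (T·H''(∂ₓv))⁻¹} = 0`. -/
def ViscSub1 (T : ℝ) (H uT v : ℝ → ℝ) : Prop :=
  ∀ φ : ℝ → ℝ, ContDiff ℝ 2 φ → ∀ x0 : ℝ,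
    IsLocalMax (fun x => v x - φ x) x0 → v x0 = φ x0 →
    φ x0 ≤ uT x0 ∨ 1 / (T * deriv (deriv H) (deriv φ x0)) ≤ deriv (deriv φ) x0

private lemma exists_max_on_ball {f : ℝ → ℝ} (hf : Continuous f) (y R : ℝ)
    (hout : ∀ z, R < |z - y| → f z < f y) :
    ∃ z, |z - y| ≤ R ∧ ∀ z', f z' ≤ f z := by
  have h0R : 0 ≤ R := by
    by_contra h
    push_neg at h
    exact absurd (hout y (by rw [sub_self, abs_zero]; linarith)) (lt_irrefl _)
  obtain ⟨z, hz, hmax⟩ := (isCompact_Icc (a := y - R) (b := y + R)).exists_isMaxOn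
      ⟨y, by constructor <;> linarith⟩ hf.continuousOn
  refine ⟨z, ?_, fun z' => ?_⟩
  · have h1 := hz.1; have h2 := hz.2
    rw [abs_le]; constructor <;> linarith
  · by_cases h : z' ∈ Icc (y - R) (y + R)
    · exact hmax h
    · have hR : R < |z' - y| := by
        simp only [mem_Icc, not_and_or, not_le] at h
        rcases h with h | h
        · rw [abs_sub_comm, abs_of_pos (by linarith)]; linarith
        · rw [abs_of_pos (by linarith)]; linarith
      have hy : y ∈ Icc (y - R) (y + R) := ⟨by linarith, by linarith⟩
      exact (hout z' hR).le.trans (hmax hy)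

private lemma exists_min_on_ball {f : ℝ → ℝ} (hf : Continuous f) (y R : ℝ)
    (hout : ∀ z, R < |z - y| → f y < f z) :
    ∃ z, |z - y| ≤ R ∧ ∀ z', f z ≤ f z' := by
  obtain ⟨z, h1, h2⟩ := exists_max_on_ball (f := fun z => -f z) hf.neg y R
      (fun z hz => neg_lt_neg (hout z hz))
  exact ⟨z, h1, fun z' => by have := h2 z'; linarith⟩

private lemma second_deriv_test {g g' : ℝ → ℝ} {x0 c : ℝ}
    (hg : ∀ x, HasDerivAt g (g' x) x) (hg' : HasDerivAt g' c x0)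
    (hmin : IsLocalMin g x0) : 0 ≤ c := by
  by_contra hc
  push_neg at hc
  have h0 : g' x0 = 0 := hmin.hasDerivAt_eq_zero (hg x0)
  have hs : Tendsto (slope g' x0) (𝓝[≠] x0) (𝓝 c) :=
    hasDerivAt_iff_tendsto_slope.mp hg'
  have hs' : Tendsto (slope g' x0) (𝓝[>] x0) (𝓝 c) :=
    hs.mono_left (nhdsWithin_mono x0 fun x hx => ne_of_gt hx)
  have hev : ∀ᶠ x in 𝓝[>] x0, slope g' x0 x < c / 2 :=
    hs'.eventually_lt_const (by linarith)
  have hev2 : ∀ᶠ x in 𝓝[>] x0, g' x < 0 := by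
    filter_upwards [hev, self_mem_nhdsWithin] with x hx hx'
    have hxx : (0:ℝ) < x - x0 := sub_pos.mpr hx'
    have h1 : (g' x - g' x0) / (x - x0) < c / 2 := by
      simpa [slope_def_field] using hx
    rw [h0, sub_zero] at h1
    have h2 := (div_lt_iff₀ hxx).mp h1
    nlinarith
  have hev3 : ∀ᶠ x in 𝓝[>] x0, g x0 ≤ g x := hmin.filter_mono nhdsWithin_le_nhds
  obtain ⟨u, hu, hsub⟩ := mem_nhdsGT_iff_exists_Ioc_subset.mp (hev2.and hev3)
  have hu' : x0 < u := hu
  have hanti : StrictAntiOn g (Icc x0 u) := by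
    apply strictAntiOn_of_deriv_neg (convex_Icc _ _)
      (fun x _ => (hg x).continuousAt.continuousWithinAt)
    intro x hx
    rw [interior_Icc] at hx
    rw [(hg x).deriv]
    exact (hsub ⟨hx.1, hx.2.le⟩).1
  have h1 : g u < g x0 := hanti ⟨le_rfl, hu'.le⟩ ⟨hu'.le, le_rfl⟩ hu'
  have h2 : g x0 ≤ g u := (hsub ⟨hu', le_rfl⟩).2
  linarith

set_option maxHeartbeats 4000000 in
/-- In one dimension, `u_T^* := S_T^+(S_T^- u_T)` is a viscosity solution
(both super- and subsolution) of the obstacle problem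
`min{v - u_T, -∂ₓₓv + (T·H''(∂ₓv))⁻¹} = 0`. -/
theorem semiconcave_envelope_viscosity_solution_1D
    (T : ℝ) (hT : 0 < T)
    (H : ℝ → ℝ) (hH : ContDiff ℝ 2 H)
    (hHconv : ∀ p : ℝ, 0 < deriv (deriv H) p)
    (hHsuper : Tendsto (fun p : ℝ => H p / |p|) (cocompact ℝ) atTop)
    (uT : ℝ → ℝ) (huT : IsLip1 uT) :
    ViscSuper1 T H uT (Splus1 T (legendre1 H) (Sminus1 T (legendre1 H) uT)) ∧
      ViscSub1 T H uT (Splus1 T (legendre1 H) (Sminus1 T (legendre1 H) uT)) := by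
  unfold ViscSuper1 ViscSub1
  classical
  obtain ⟨K, hK⟩ := huT
  set Kr : ℝ := (K : ℝ) with hKrdef
  have hKr0 : 0 ≤ Kr := K.coe_nonneg
  have hLip : ∀ a b : ℝ, |uT a - uT b| ≤ Kr * |a - b| := by
    intro a b
    have h := hK.dist_le_mul a b
    rwa [Real.dist_eq, Real.dist_eq] at h
  have huTc : Continuous uT := hK.continuous
  have hHd : Differentiable ℝ H := hH.differentiable two_ne_zero
  have hH1 : ContDiff ℝ 1 (deriv H) := by
    have h2 : ContDiff ℝ (1 + 1 : ℕ) H := by exact_mod_cast hH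
    exact ((contDiff_succ_iff_deriv).mp h2).2.2
  have hH'c : Continuous (deriv H) := hH1.continuous
  have hH'd : Differentiable ℝ (deriv H) := hH1.differentiable one_ne_zero
  have hH2 : ∀ p, HasDerivAt (deriv H) (deriv (deriv H) p) p := fun p => (hH'd p).hasDerivAt
  have hH'mono : StrictMono (deriv H) := strictMono_of_deriv_pos hHconv
  -- superlinearity pieces
  have hcoc : Tendsto (fun p : ℝ => H p / |p|) atTop atTop :=
    hHsuper.mono_left (by rw [cocompact_eq_atBot_atTop]; exact le_sup_right)
  have hcocb : Tendsto (fun p : ℝ => H p / |p|) atBot atTop :=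
    hHsuper.mono_left (by rw [cocompact_eq_atBot_atTop]; exact le_sup_left)
  have hslope_le : ∀ p : ℝ, 0 < p → (H p - H 0) / p ≤ deriv H p := by
    intro p hp
    obtain ⟨ξ, hξ, hξeq⟩ := exists_hasDerivAt_eq_slope H (deriv H) hp
      hHd.continuous.continuousOn (fun x _ => (hHd x).hasDerivAt)
    have h1 : deriv H ξ ≤ deriv H p := hH'mono.monotone hξ.2.le
    rw [sub_zero] at hξeq
    linarith [hξeq ▸ h1]
  have hslope_ge : ∀ p : ℝ, p < 0 → deriv H p ≤ (H p - H 0) / p := by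
    intro p hp
    obtain ⟨ξ, hξ, hξeq⟩ := exists_hasDerivAt_eq_slope H (deriv H) hp
      hHd.continuous.continuousOn (fun x _ => (hHd x).hasDerivAt)
    have h1 : deriv H p ≤ deriv H ξ := hH'mono.monotone hξ.1.le
    have h2 : (H 0 - H p) / (0 - p) = (H p - H 0) / p := by
      rw [zero_sub, div_neg, ← neg_div, neg_sub]
    rw [h2] at hξeq
    linarith [hξeq ▸ h1]
  have htop : Tendsto (deriv H) atTop atTop := by
    have h1 : Tendsto (fun p : ℝ => (H p - H 0) / p) atTop atTop := by
      have hev : ∀ᶠ p : ℝ in atTop, H p / |p| + (-1) ≤ (H p - H 0) / p := by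
        filter_upwards [eventually_ge_atTop (max 1 |H 0|)] with p hp
        have hp1 : (1:ℝ) ≤ p := le_trans (le_max_left _ _) hp
        have hp0 : (0:ℝ) < p := by linarith
        rw [abs_of_pos hp0, sub_div]
        have h3 : H 0 / p ≤ 1 := by
          rw [div_le_one hp0]
          calc H 0 ≤ |H 0| := le_abs_self _
          _ ≤ p := le_trans (le_max_right _ _) hp
        linarith
      exact tendsto_atTop_mono' _ hev (tendsto_atTop_add_const_right _ _ hcoc)
    apply tendsto_atTop_mono' _ _ h1
    filter_upwards [eventually_gt_atTop (0:ℝ)] with p hp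
    exact hslope_le p hp
  have hbot : Tendsto (deriv H) atBot atBot := by
    have h1 : Tendsto (fun p : ℝ => (H p - H 0) / p) atBot atBot := by
      have hev : ∀ᶠ p : ℝ in atBot, (H p - H 0) / p ≤ -(H p / |p|) + 1 := by
        filter_upwards [eventually_le_atBot (min (-1) (-|H 0|))] with p hp
        have hp1 : p ≤ -1 := le_trans hp (min_le_left _ _)
        have hp0 : p < 0 := by linarith
        rw [abs_of_neg hp0, sub_div, div_neg, neg_neg]
        have h3 : -1 ≤ H 0 / p := by
          rw [neg_le, ← div_neg]
          rw [div_le_one (by linarith : (0:ℝ) < -p)]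
          calc H 0 ≤ |H 0| := le_abs_self _
          _ ≤ -p := by have := le_trans hp (min_le_right (-1) (-|H 0|)); linarith
        linarith
      have h2 : Tendsto (fun p : ℝ => -(H p / |p|) + 1) atBot atBot := by
        apply tendsto_atBot_add_const_right
        exact tendsto_neg_atTop_atBot.comp hcocb
      exact tendsto_atBot_mono' _ hev h2
    apply tendsto_atBot_mono' _ _ h1
    filter_upwards [eventually_lt_atBot (0:ℝ)] with p hp
    exact hslope_ge p hp
  have hH'surj : Function.Surjective (deriv H) := hH'c.surjective htop hbot
  set e := StrictMono.orderIsoOfSurjective (deriv H) hH'mono hH'surj with hedef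
  set P : ℝ → ℝ := fun q => e.symm q with hPdef
  have hPright : ∀ q, deriv H (P q) = q := fun q =>
    StrictMono.orderIsoOfSurjective_self_symm_apply (deriv H) hH'mono hH'surj q
  have hPleft : ∀ p, P (deriv H p) = p := fun p =>
    StrictMono.orderIsoOfSurjective_symm_apply_self (deriv H) hH'mono hH'surj p
  have hPmono : StrictMono P := fun a b hab => e.symm.strictMono hab
  have hPcont : Continuous P := OrderIso.continuous e.symm
  have hPder : ∀ q, HasDerivAt P ((deriv (deriv H) (P q))⁻¹) q := by
    intro q
    exact HasDerivAt.of_local_left_inverse hPcont.continuousAt (hH2 (P q))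
      (hHconv (P q)).ne' (Eventually.of_forall hPright)
  set Lf : ℝ → ℝ := legendre1 H with hLfdef
  have hbddL : ∀ q : ℝ, BddAbove (Set.range fun p => q * p - H p) := by
    intro q
    obtain ⟨s, hs, hsub⟩ := mem_cocompact.mp (hHsuper.eventually (eventually_ge_atTop (|q| + 1)))
    have hs' : IsCompact (s ∪ Icc (-1) 1) := hs.union isCompact_Icc
    obtain ⟨M, hM⟩ := hs'.exists_bound_of_continuousOn
      ((continuous_const.mul continuous_id).sub hH.continuous).continuousOn
    refine ⟨max M 0, ?_⟩
    rintro _ ⟨p, rfl⟩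
    by_cases hp : p ∈ s ∪ Icc (-1) 1
    · calc q * p - H p ≤ |q * p - H p| := le_abs_self _
        _ ≤ M := by simpa [Real.norm_eq_abs] using hM p hp
        _ ≤ max M 0 := le_max_left _ _
    · rw [mem_union, not_or] at hp
      have hp1 : 1 < |p| := by
        by_contra hcon
        push_neg at hcon
        have := abs_le.mp hcon
        exact hp.2 ⟨this.1, this.2⟩
      have hps : |q| + 1 ≤ H p / |p| := hsub hp.1
      have hp0 : (0:ℝ) < |p| := by linarith
      have hHp : (|q| + 1) * |p| ≤ H p := (le_div_iff₀ hp0).mp hps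
      have hqp : q * p ≤ |q| * |p| := by
        calc q * p ≤ |q * p| := le_abs_self _
          _ = |q| * |p| := abs_mul q p
      have : q * p - H p ≤ 0 := by nlinarith [abs_nonneg p]
      exact le_trans this (le_max_right _ _)
  have hLge : ∀ q p : ℝ, q * p - H p ≤ Lf q := fun q p => le_ciSup (hbddL q) p
  have htan : ∀ p₀ p : ℝ, H p₀ + deriv H p₀ * (p - p₀) ≤ H p := by
    intro p₀ p
    rcases lt_trichotomy p p₀ with h | h | h
    · obtain ⟨ξ, hξ, hξeq⟩ := exists_hasDerivAt_eq_slope H (deriv H) h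
        hHd.continuous.continuousOn (fun x _ => (hHd x).hasDerivAt)
      have h1 : deriv H ξ ≤ deriv H p₀ := hH'mono.monotone hξ.2.le
      have h2 : H p₀ - H p = deriv H ξ * (p₀ - p) := by
        rw [hξeq]; field_simp
      nlinarith
    · simp [h]
    · obtain ⟨ξ, hξ, hξeq⟩ := exists_hasDerivAt_eq_slope H (deriv H) h
        hHd.continuous.continuousOn (fun x _ => (hHd x).hasDerivAt)
      have h1 : deriv H p₀ ≤ deriv H ξ := hH'mono.monotone hξ.1.le
      have h2 : H p - H p₀ = deriv H ξ * (p - p₀) := by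
        rw [hξeq]; field_simp
      nlinarith
  have hLval : ∀ q : ℝ, Lf q = q * P q - H (P q) := by
    intro q
    apply le_antisymm
    · apply ciSup_le
      intro p
      have h1 := htan (P q) p
      rw [hPright q] at h1
      nlinarith
    · exact hLge q (P q)
  have hLkey : ∀ q r : ℝ, (r - q) * P q ≤ Lf r - Lf q ∧ Lf r - Lf q ≤ (r - q) * P r := by
    intro q r
    constructor
    · have h1 : r * P q - H (P q) ≤ Lf r := hLge r (P q)
      have h2 : Lf q = q * P q - H (P q) := hLval q
      nlinarith
    · have h1 : q * P r - H (P r) ≤ Lf q := hLge q (P r)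
      have h2 : Lf r = r * P r - H (P r) := hLval r
      nlinarith
  have hLder : ∀ q : ℝ, HasDerivAt Lf (P q) q := by
    intro q
    rw [hasDerivAt_iff_tendsto_slope]
    apply tendsto_iff_dist_tendsto_zero.mpr
    have hb : ∀ᶠ r in 𝓝[≠] q, dist (slope Lf q r) (P q) ≤ |P r - P q| := by
      filter_upwards [self_mem_nhdsWithin] with r hr
      have hne : r ≠ q := hr
      rw [Real.dist_eq, slope_def_field]
      have k1 := (hLkey q r).1
      have k2 := (hLkey q r).2
      rcases lt_or_gt_of_ne hne with h | h
      · have hd : r - q < 0 := sub_neg.mpr h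
        have e1 : (Lf r - Lf q) / (r - q) ≤ P q := by
          rw [div_le_iff_of_neg hd]; nlinarith
        have e2 : P r ≤ (Lf r - Lf q) / (r - q) := by
          rw [le_div_iff_of_neg hd]; nlinarith
        have h3 : |(Lf r - Lf q) / (r - q) - P q| ≤ P q - P r := by
          rw [abs_le]; constructor <;> linarith
        refine h3.trans ?_
        rw [abs_sub_comm]
        exact le_abs_self _
      · have hd : 0 < r - q := sub_pos.mpr h
        have e1 : P q ≤ (Lf r - Lf q) / (r - q) := by
          rw [le_div_iff₀ hd]; nlinarith
        have e2 : (Lf r - Lf q) / (r - q) ≤ P r := by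
          rw [div_le_iff₀ hd]; nlinarith
        have h3 : |(Lf r - Lf q) / (r - q) - P q| ≤ P r - P q := by
          rw [abs_le]; constructor <;> linarith
        exact h3.trans (le_abs_self _)
    have h0 : Tendsto (fun r => |P r - P q|) (𝓝[≠] q) (𝓝 0) := by
      have h1 : Tendsto (fun r => |P r - P q|) (𝓝 q) (𝓝 |P q - P q|) :=
        ((hPcont.tendsto q).sub tendsto_const_nhds).abs
      simp only [sub_self, abs_zero] at h1
      exact h1.mono_left nhdsWithin_le_nhds
    exact squeeze_zero' (Eventually.of_forall fun r => dist_nonneg) hb h0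
  have hLcont : Continuous Lf := by
    have : Differentiable ℝ Lf := fun x => (hLder x).differentiableAt
    exact this.continuous
  set CC : ℝ := max (H (Kr + 1)) (H (-(Kr + 1))) with hCCdef
  have hC : ∀ q : ℝ, (Kr + 1) * |q| - CC ≤ Lf q := by
    intro q
    rcases le_or_gt 0 q with h | h
    · rw [abs_of_nonneg h]
      have h1 := hLge q (Kr + 1)
      have h2 : H (Kr + 1) ≤ CC := le_max_left _ _
      nlinarith
    · rw [abs_of_neg h]
      have h1 := hLge q (-(Kr + 1))
      have h2 : H (-(Kr + 1)) ≤ CC := le_max_right _ _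
      nlinarith
  have hCL0 : 0 ≤ CC + Lf 0 := by
    have := hC 0
    simp only [abs_zero, mul_zero, zero_sub] at this
    linarith
  have hTL : ∀ r : ℝ, (Kr + 1) * |r| - T * CC ≤ T * Lf (r / T) := by
    intro r
    have h1 := hC (r / T)
    have h2 : |r / T| = |r| / T := by rw [abs_div, abs_of_pos hT]
    rw [h2] at h1
    have h3 := mul_le_mul_of_nonneg_left h1 hT.le
    calc (Kr + 1) * |r| - T * CC = T * ((Kr + 1) * (|r| / T) - CC) := by
          field_simp
    _ ≤ T * Lf (r / T) := h3
  have hLipAbs : ∀ a b : ℝ, uT a ≤ uT b + Kr * |a - b| := by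
    intro a b
    have h1 := hLip a b
    have h2 := le_abs_self (uT a - uT b)
    linarith
  set w : ℝ → ℝ := Sminus1 T Lf uT with hwdef
  set v : ℝ → ℝ := Splus1 T Lf w with hvdef
  -- B part
  have hfb_le : ∀ y z : ℝ, uT z - T * Lf ((z - y)/T) ≤ uT y - |z - y| + T * CC := by
    intro y z
    have h1 := hTL (z - y)
    have h2 := hLipAbs z y
    have h3 : (Kr + 1) * |z - y| = Kr * |z - y| + |z - y| := by ring
    linarith
  have hbw : ∀ y : ℝ, BddAbove (Set.range fun z => uT z - T * Lf ((z - y)/T)) := by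
    intro y
    refine ⟨uT y + T * CC, ?_⟩
    rintro _ ⟨z, rfl⟩
    have := hfb_le y z
    have := abs_nonneg (z - y)
    simp only at *
    linarith
  have hwge : ∀ y z : ℝ, uT z - T * Lf ((z - y)/T) ≤ w y := by
    intro y z
    rw [hwdef]
    exact le_ciSup (hbw y) z
  have hwle : ∀ y : ℝ, w y ≤ uT y + T * CC := by
    intro y
    rw [hwdef]
    apply ciSup_le
    intro z
    have := hfb_le y z
    have := abs_nonneg (z - y)
    linarith
  set R₀ : ℝ := T * CC + T * Lf 0 + 1 with hR₀def
  have hR₀ : 0 < R₀ := by nlinarith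
  have hwmax : ∀ y : ℝ, ∃ z, |z - y| ≤ R₀ ∧ w y = uT z - T * Lf ((z - y)/T) := by
    intro y
    have hcont : Continuous fun z => uT z - T * Lf ((z - y)/T) :=
      huTc.sub (continuous_const.mul (hLcont.comp ((continuous_id.sub continuous_const).div_const T)))
    have hout : ∀ z, R₀ < |z - y| → uT z - T * Lf ((z - y)/T) < uT y - T * Lf ((y - y)/T) := by
      intro z hz
      have h1 := hfb_le y z
      have h2 : (y - y)/T = 0 := by rw [sub_self, zero_div]
      rw [h2]
      nlinarith
    obtain ⟨z, hz1, hz2⟩ := exists_max_on_ball hcont y R₀ hout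
    refine ⟨z, hz1, le_antisymm ?_ (hwge y z)⟩
    rw [hwdef]
    exact ciSup_le hz2
  have hwlip1 : ∀ a b : ℝ, w a ≤ w b + Kr * |a - b| := by
    intro a b
    obtain ⟨z, _, hz⟩ := hwmax a
    have h1 : uT (z + (b - a)) - T * Lf ((z + (b - a) - b)/T) ≤ w b := hwge b (z + (b - a))
    have h2 : z + (b - a) - b = z - a := by ring
    rw [h2] at h1
    have h3 := hLipAbs z (z + (b - a))
    have h4 : |z - (z + (b - a))| = |a - b| := by
      rw [show z - (z + (b - a)) = a - b by ring]
    rw [h4] at h3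
    rw [hz]
    linarith
  have hwlip : ∀ a b : ℝ, |w a - w b| ≤ Kr * |a - b| := by
    intro a b
    rw [abs_sub_le_iff]
    constructor
    · have := hwlip1 a b; linarith
    · have := hwlip1 b a
      rw [abs_sub_comm] at this
      linarith
  have hwcont : Continuous w := by
    have hl : LipschitzWith (Real.toNNReal Kr) w := by
      apply LipschitzWith.of_dist_le_mul
      intro a b
      rw [Real.dist_eq, Real.dist_eq, Real.coe_toNNReal _ hKr0]
      exact hwlip a b
    exact hl.continuous
  -- C part
  have hfc_ge : ∀ x y : ℝ, uT x + |x - y| - T * Lf 0 - T * CC ≤ w y + T * Lf ((x - y)/T) := by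
    intro x y
    have h1 := hwge y y
    have h2 : (y - y)/T = 0 := by rw [sub_self, zero_div]
    rw [h2] at h1
    have h3 := hLipAbs x y
    have h4 := hTL (x - y)
    have h5 : (Kr + 1) * |x - y| = Kr * |x - y| + |x - y| := by ring
    linarith
  have hbv : ∀ x : ℝ, BddBelow (Set.range fun y => w y + T * Lf ((x - y)/T)) := by
    intro x
    refine ⟨uT x - T * Lf 0 - T * CC, ?_⟩
    rintro _ ⟨y, rfl⟩
    have := hfc_ge x y
    have := abs_nonneg (x - y)
    simp only at *
    linarith
  have hvle : ∀ x y : ℝ, v x ≤ w y + T * Lf ((x - y)/T) := by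
    intro x y
    rw [hvdef]
    exact ciInf_le (hbv x) y
  have hvge : ∀ x : ℝ, uT x ≤ v x := by
    intro x
    rw [hvdef]
    apply le_ciInf
    intro y
    have := hwge y x
    linarith
  have hvlex : ∀ x : ℝ, v x ≤ w x + T * Lf 0 := by
    intro x
    have := hvle x x
    rw [sub_self, zero_div] at this
    exact this
  set R₁ : ℝ := 2 * T * CC + 2 * T * Lf 0 + 1 with hR₁def
  have hvmin : ∀ x : ℝ, ∃ y, |y - x| ≤ R₁ ∧ v x = w y + T * Lf ((x - y)/T) := by
    intro x
    have hcont : Continuous fun y => w y + T * Lf ((x - y)/T) :=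
      hwcont.add (continuous_const.mul (hLcont.comp ((continuous_const.sub continuous_id).div_const T)))
    have hout : ∀ y, R₁ < |y - x| → w x + T * Lf ((x - x)/T) < w y + T * Lf ((x - y)/T) := by
      intro y hy
      have h1 := hfc_ge x y
      have h2 : (x - x)/T = 0 := by rw [sub_self, zero_div]
      rw [h2]
      have h3 := hwle x
      have h4 : |x - y| = |y - x| := abs_sub_comm x y
      rw [h4] at h1
      nlinarith
    obtain ⟨y, hy1, hy2⟩ := exists_min_on_ball hcont x R₁ hout
    refine ⟨y, hy1, le_antisymm (hvle x y) ?_⟩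
    rw [hvdef]
    exact le_ciInf hy2
  have hvlip1 : ∀ a b : ℝ, v b ≤ v a + Kr * |b - a| := by
    intro a b
    obtain ⟨y1, _, hy1⟩ := hvmin a
    have h1 := hvle b (y1 + (b - a))
    have h2 : b - (y1 + (b - a)) = a - y1 := by ring
    rw [h2] at h1
    have h3 := hwlip (y1 + (b - a)) y1
    have h4 : |y1 + (b - a) - y1| = |b - a| := by
      rw [show y1 + (b - a) - y1 = b - a by ring]
    rw [h4] at h3
    have h5 : w (y1 + (b - a)) - w y1 ≤ Kr * |b - a| :=
      le_trans (le_abs_self _) h3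
    rw [hy1]
    linarith
  have hvcont : Continuous v := by
    have hl : LipschitzWith (Real.toNNReal Kr) v := by
      apply LipschitzWith.of_dist_le_mul
      intro a b
      rw [Real.dist_eq, Real.dist_eq, Real.coe_toNNReal _ hKr0]
      rw [abs_sub_le_iff]
      constructor
      · have := hvlip1 b a; linarith
      · have h := hvlip1 a b
        rw [abs_sub_comm] at h
        linarith
    exact hl.continuous
  -- monotone graph lemma
  have convpair : ∀ a c d b : ℝ, a < c → c ≤ d → d < b → a + b = c + d →
      Lf c + Lf d < Lf a + Lf b := by
    intro a c d b h1 h2 h3 h4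
    obtain ⟨ξ₂, hξ₂, hξ₂eq⟩ := exists_hasDerivAt_eq_slope Lf P h1 hLcont.continuousOn
      (fun x _ => hLder x)
    obtain ⟨ξ₁, hξ₁, hξ₁eq⟩ := exists_hasDerivAt_eq_slope Lf P h3 hLcont.continuousOn
      (fun x _ => hLder x)
    have hlt : P ξ₂ < P ξ₁ := hPmono (by cases hξ₂ with | intro u1 u2 => cases hξ₁ with
      | intro v1 v2 => linarith)
    have hca : (0:ℝ) < c - a := by linarith
    have e2 : Lf c - Lf a = P ξ₂ * (c - a) := by
      rw [hξ₂eq, div_mul_cancel₀ _ (by linarith : c - a ≠ 0)]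
    have e1 : Lf b - Lf d = P ξ₁ * (b - d) := by
      rw [hξ₁eq, div_mul_cancel₀ _ (by linarith : b - d ≠ 0)]
    have hbd : b - d = c - a := by linarith
    rw [hbd] at e1
    nlinarith [mul_lt_mul_of_pos_right hlt hca]
  have hmonoR : ∀ x1 y1 x2 y2 : ℝ,
      v x1 = w y1 + T * Lf ((x1 - y1)/T) → v x2 = w y2 + T * Lf ((x2 - y2)/T) →
      x1 < x2 → y1 ≤ y2 := by
    intro x1 y1 x2 y2 hR1 hR2 hx
    by_contra hy
    push_neg at hy
    have c1 := hvle x1 y2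
    have c2 := hvle x2 y1
    have hTpos := hT
    have hsumLe : Lf ((x1 - y1)/T) + Lf ((x2 - y2)/T) ≤ Lf ((x1 - y2)/T) + Lf ((x2 - y1)/T) := by
      have hadd : T * (Lf ((x1 - y1)/T) + Lf ((x2 - y2)/T)) ≤
          T * (Lf ((x1 - y2)/T) + Lf ((x2 - y1)/T)) := by linarith
      exact le_of_mul_le_mul_left hadd hT
    have hac : (x1 - y1)/T < (x1 - y2)/T := by
      apply div_lt_div_of_pos_right ?_ hT
      linarith
    have had : (x1 - y1)/T < (x2 - y1)/T := by
      apply div_lt_div_of_pos_right ?_ hT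
      linarith
    have hcb : (x1 - y2)/T < (x2 - y2)/T := by
      apply div_lt_div_of_pos_right ?_ hT
      linarith
    have hdb : (x2 - y1)/T < (x2 - y2)/T := by
      apply div_lt_div_of_pos_right ?_ hT
      linarith
    have hsum : (x1 - y1)/T + (x2 - y2)/T = (x1 - y2)/T + (x2 - y1)/T := by
      field_simp
      ring
    have hstrict : Lf ((x1 - y2)/T) + Lf ((x2 - y1)/T) <
        Lf ((x1 - y1)/T) + Lf ((x2 - y2)/T) := by
      rcases le_total ((x1 - y2)/T) ((x2 - y1)/T) with h | h
      · exact convpair _ _ _ _ hac h hdb hsum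
      · have := convpair _ _ _ _ had h hcb (by linarith)
        linarith
    linarith
  -- derivative helpers
  have hInner : ∀ (y0 x : ℝ), HasDerivAt (fun x : ℝ => (x - y0)/T) (1/T) x := by
    intro y0 x
    simpa using ((hasDerivAt_id x).sub_const y0).div_const T
  have hEta : ∀ (y0 x : ℝ),
      HasDerivAt (fun x => w y0 + T * Lf ((x - y0)/T)) (P ((x - y0)/T)) x := by
    intro y0 x
    have h2 := (hLder ((x - y0)/T)).comp x (hInner y0 x)
    have h3 := h2.const_mul T
    have h4 := h3.const_add (w y0)
    rw [mul_left_comm, mul_one_div_cancel hT.ne', mul_one] at h4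
    exact h4
  have hEta' : ∀ (y0 x : ℝ), HasDerivAt (fun x => P ((x - y0)/T))
      ((deriv (deriv H) (P ((x - y0)/T)))⁻¹ * (1/T)) x := by
    intro y0 x
    exact (hPder ((x - y0)/T)).comp x (hInner y0 x)
  have hfrac : ∀ p0 : ℝ, 1 / (T * deriv (deriv H) p0) = (deriv (deriv H) p0)⁻¹ * (1/T) := by
    intro p0
    rw [one_div, mul_inv]
    ring
  constructor
  · -- supersolution
    intro φ hφ x0 hmin heq
    have hφdiff : Differentiable ℝ φ := hφ.differentiable two_ne_zero
    have hφd : ∀ x, HasDerivAt φ (deriv φ x) x := fun x => (hφdiff x).hasDerivAt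
    have hφ1 : ContDiff ℝ 1 (deriv φ) := by
      have h2 : ContDiff ℝ (1 + 1 : ℕ) φ := by exact_mod_cast hφ
      exact ((contDiff_succ_iff_deriv).mp h2).2.2
    have hφd2 : HasDerivAt (deriv φ) (deriv (deriv φ) x0) x0 :=
      (hφ1.differentiable one_ne_zero x0).hasDerivAt
    obtain ⟨y0, hy0R, hy0⟩ := hvmin x0
    have hψmin : IsLocalMin (fun x => (w y0 + T * Lf ((x - y0)/T)) - φ x) x0 := by
      have h1 : ∀ᶠ x in 𝓝 x0, v x0 - φ x0 ≤ v x - φ x := hmin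
      filter_upwards [h1] with x hx
      have h2 := hvle x y0
      show (w y0 + T * Lf ((x0 - y0)/T)) - φ x0 ≤ (w y0 + T * Lf ((x - y0)/T)) - φ x
      linarith [hy0]
    have hd1 : deriv φ x0 = P ((x0 - y0)/T) := by
      have h := hψmin.hasDerivAt_eq_zero ((hEta y0 x0).sub (hφd x0))
      linarith [h]
    constructor
    · rw [← heq]
      exact hvge x0
    · have h2 := second_deriv_test
        (g := fun x => (w y0 + T * Lf ((x - y0)/T)) - φ x)
        (g' := fun x => P ((x - y0)/T) - deriv φ x)
        (fun x => (hEta y0 x).sub (hφd x))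
        ((hEta' y0 x0).sub hφd2) hψmin
      rw [hd1, hfrac]
      linarith
  · -- subsolution
    intro φ hφ x0 hmax heq
    by_cases hcase : v x0 ≤ uT x0
    · left
      rw [← heq]
      exact hcase
    · right
      push_neg at hcase
      have hφdiff : Differentiable ℝ φ := hφ.differentiable two_ne_zero
      have hφd : ∀ x, HasDerivAt φ (deriv φ x) x := fun x => (hφdiff x).hasDerivAt
      have hφ1 : ContDiff ℝ 1 (deriv φ) := by
        have h2 : ContDiff ℝ (1 + 1 : ℕ) φ := by exact_mod_cast hφ
        exact ((contDiff_succ_iff_deriv).mp h2).2.2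
      have hφd2 : HasDerivAt (deriv φ) (deriv (deriv φ) x0) x0 :=
        (hφ1.differentiable one_ne_zero x0).hasDerivAt
      obtain ⟨y0, hy0R, hy0⟩ := hvmin x0
      have hcontact : ∀ y : ℝ, ∃ z, |z - y| ≤ R₀ ∧
          v z = w y + T * Lf ((z - y)/T) ∧ v z = uT z := by
        intro y
        obtain ⟨z, hz1, hz2⟩ := hwmax y
        have h1 : v z ≤ uT z := by
          have h := hvle z y
          rw [hz2] at h
          linarith
        have h3 : v z = uT z := le_antisymm h1 (hvge z)
        refine ⟨z, hz1, ?_, h3⟩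
        rw [h3, hz2]
        ring
      -- right contact point
      have hseqR : ∀ n : ℕ, ∃ z, x0 ≤ z ∧ |z - (y0 + 1/((n:ℝ)+1))| ≤ R₀ ∧
          v z = w (y0 + 1/((n:ℝ)+1)) + T * Lf ((z - (y0 + 1/((n:ℝ)+1)))/T) ∧ v z = uT z := by
        intro n
        obtain ⟨z, h1, h2, h3⟩ := hcontact (y0 + 1/((n:ℝ)+1))
        refine ⟨z, ?_, h1, h2, h3⟩
        by_contra hzx
        push_neg at hzx
        have hmono := hmonoR z (y0 + 1/((n:ℝ)+1)) x0 y0 h2 hy0 hzx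
        have hpos : (0:ℝ) < 1/((n:ℝ)+1) := by positivity
        linarith
      choose zR hzR1 hzR2 hzR3 hzR4 using hseqR
      have hzRmem : ∀ n, zR n ∈ Icc x0 (y0 + 1 + R₀) := by
        intro n
        refine ⟨hzR1 n, ?_⟩
        have h := (abs_le.mp (hzR2 n)).2
        have h2 : 1/((n:ℝ)+1) ≤ 1 := by
          rw [div_le_one (by positivity)]
          have := Nat.cast_nonneg (α := ℝ) n
          linarith
        linarith
      obtain ⟨zhat, hzhatmem, σ, hσmono, hσtend⟩ :=
        (isCompact_Icc (a := x0) (b := y0 + 1 + R₀)).tendsto_subseq hzRmem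
      have hytend : Tendsto (fun n : ℕ => y0 + 1/((σ n : ℝ)+1)) atTop (𝓝 y0) := by
        have h1 : Tendsto (fun n : ℕ => 1/((n:ℝ)+1)) atTop (𝓝 0) :=
          tendsto_one_div_add_atTop_nhds_zero_nat
        have h2 := h1.comp hσmono.tendsto_atTop
        have h3 := (tendsto_const_nhds (x := y0) (f := atTop (α := ℕ))).add h2
        simpa using h3
      have hvz : Tendsto (fun n => v (zR (σ n))) atTop (𝓝 (v zhat)) :=
        (hvcont.tendsto zhat).comp hσtend
      have hzhat_contact : v zhat = uT zhat := by
        have h2 : Tendsto (fun n => uT (zR (σ n))) atTop (𝓝 (v zhat)) :=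
          hvz.congr (fun n => hzR4 (σ n))
        have h3 : Tendsto (fun n => uT (zR (σ n))) atTop (𝓝 (uT zhat)) :=
          (huTc.tendsto zhat).comp hσtend
        exact tendsto_nhds_unique h2 h3
      have hzhatR : v zhat = w y0 + T * Lf ((zhat - y0)/T) := by
        have h1 : Tendsto (fun n => w (y0 + 1/((σ n : ℝ)+1)) +
            T * Lf ((zR (σ n) - (y0 + 1/((σ n : ℝ)+1)))/T)) atTop (𝓝 (v zhat)) :=
          hvz.congr (fun n => hzR3 (σ n))
        have h2 : Tendsto (fun n => w (y0 + 1/((σ n : ℝ)+1)) +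
            T * Lf ((zR (σ n) - (y0 + 1/((σ n : ℝ)+1)))/T)) atTop
            (𝓝 (w y0 + T * Lf ((zhat - y0)/T))) := by
          apply Tendsto.add
          · exact (hwcont.tendsto y0).comp hytend
          · apply Tendsto.const_mul
            apply (hLcont.tendsto _).comp
            exact (hσtend.sub hytend).div_const T
        exact tendsto_nhds_unique h1 h2
      have hzhat_gt : x0 < zhat := by
        rcases lt_or_eq_of_le hzhatmem.1 with h | h
        · exact h
        · exfalso
          rw [← h] at hzhat_contact
          rw [hzhat_contact] at hcase
          exact lt_irrefl _ hcase
      -- left contact point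
      have hseqL : ∀ n : ℕ, ∃ z, z ≤ x0 ∧ |z - (y0 - 1/((n:ℝ)+1))| ≤ R₀ ∧
          v z = w (y0 - 1/((n:ℝ)+1)) + T * Lf ((z - (y0 - 1/((n:ℝ)+1)))/T) ∧ v z = uT z := by
        intro n
        obtain ⟨z, h1, h2, h3⟩ := hcontact (y0 - 1/((n:ℝ)+1))
        refine ⟨z, ?_, h1, h2, h3⟩
        by_contra hzx
        push_neg at hzx
        have hmono := hmonoR x0 y0 z (y0 - 1/((n:ℝ)+1)) hy0 h2 hzx
        have hpos : (0:ℝ) < 1/((n:ℝ)+1) := by positivity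
        linarith
      choose zL hzL1 hzL2 hzL3 hzL4 using hseqL
      have hzLmem : ∀ n, zL n ∈ Icc (y0 - 1 - R₀) x0 := by
        intro n
        refine ⟨?_, hzL1 n⟩
        have h := (abs_le.mp (hzL2 n)).1
        have h2 : 1/((n:ℝ)+1) ≤ 1 := by
          rw [div_le_one (by positivity)]
          have := Nat.cast_nonneg (α := ℝ) n
          linarith
        linarith
      obtain ⟨zchk, hzchkmem, τ, hτmono, hτtend⟩ :=
        (isCompact_Icc (a := y0 - 1 - R₀) (b := x0)).tendsto_subseq hzLmem
      have hytendL : Tendsto (fun n : ℕ => y0 - 1/((τ n : ℝ)+1)) atTop (𝓝 y0) := by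
        have h1 : Tendsto (fun n : ℕ => 1/((n:ℝ)+1)) atTop (𝓝 0) :=
          tendsto_one_div_add_atTop_nhds_zero_nat
        have h2 := h1.comp hτmono.tendsto_atTop
        have h3 := (tendsto_const_nhds (x := y0) (f := atTop (α := ℕ))).sub h2
        simpa using h3
      have hvzL : Tendsto (fun n => v (zL (τ n))) atTop (𝓝 (v zchk)) :=
        (hvcont.tendsto zchk).comp hτtend
      have hzchk_contact : v zchk = uT zchk := by
        have h2 : Tendsto (fun n => uT (zL (τ n))) atTop (𝓝 (v zchk)) :=
          hvzL.congr (fun n => hzL4 (τ n))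
        have h3 : Tendsto (fun n => uT (zL (τ n))) atTop (𝓝 (uT zchk)) :=
          (huTc.tendsto zchk).comp hτtend
        exact tendsto_nhds_unique h2 h3
      have hzchkR : v zchk = w y0 + T * Lf ((zchk - y0)/T) := by
        have h1 : Tendsto (fun n => w (y0 - 1/((τ n : ℝ)+1)) +
            T * Lf ((zL (τ n) - (y0 - 1/((τ n : ℝ)+1)))/T)) atTop (𝓝 (v zchk)) :=
          hvzL.congr (fun n => hzL3 (τ n))
        have h2 : Tendsto (fun n => w (y0 - 1/((τ n : ℝ)+1)) +
            T * Lf ((zL (τ n) - (y0 - 1/((τ n : ℝ)+1)))/T)) atTop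
            (𝓝 (w y0 + T * Lf ((zchk - y0)/T))) := by
          apply Tendsto.add
          · exact (hwcont.tendsto y0).comp hytendL
          · apply Tendsto.const_mul
            apply (hLcont.tendsto _).comp
            exact (hτtend.sub hytendL).div_const T
        exact tendsto_nhds_unique h1 h2
      have hzchk_lt : zchk < x0 := by
        rcases lt_or_eq_of_le hzchkmem.2 with h | h
        · exact h
        · exfalso
          rw [h] at hzchk_contact
          rw [hzchk_contact] at hcase
          exact lt_irrefl _ hcase
      -- the interval on which v equals the smooth function
      have hinterval : ∀ x, zchk < x → x < zhat → v x = w y0 + T * Lf ((x - y0)/T) := by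
        intro x h1 h2
        obtain ⟨y1, _, hy1⟩ := hvmin x
        have ha : y0 ≤ y1 := hmonoR zchk y0 x y1 hzchkR hy1 h1
        have hb : y1 ≤ y0 := hmonoR x y1 zhat y0 hy1 hzhatR h2
        rw [hy1, le_antisymm hb ha]
      -- local min of φ - η at x0
      have hloc : IsLocalMin (fun x => φ x - (w y0 + T * Lf ((x - y0)/T))) x0 := by
        have hO : Ioo zchk zhat ∈ 𝓝 x0 := Ioo_mem_nhds hzchk_lt hzhat_gt
        have h1 : ∀ᶠ x in 𝓝 x0, v x - φ x ≤ v x0 - φ x0 := hmax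
        filter_upwards [hO, h1] with x hxO hx1
        have h2 := hinterval x hxO.1 hxO.2
        show φ x0 - (w y0 + T * Lf ((x0 - y0)/T)) ≤ φ x - (w y0 + T * Lf ((x - y0)/T))
        linarith [hy0, heq, h2]
      have hd1 : deriv φ x0 = P ((x0 - y0)/T) := by
        have h := hloc.hasDerivAt_eq_zero ((hφd x0).sub (hEta y0 x0))
        linarith [h]
      have h2 := second_deriv_test
        (g := fun x => φ x - (w y0 + T * Lf ((x - y0)/T)))
        (g' := fun x => deriv φ x - P ((x - y0)/T))
        (fun x => (hφd x).sub (hEta y0 x))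
        (hφd2.sub (hEta' y0 x0)) hloc
      rw [hd1, hfrac]
      linarith
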